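/- Let L = I − W be the directed Laplacian of a strongly connected graph, s its stationary distribution, and M_{pp(β)} = β(I − (1−β)W)⁻¹ the personalized PageRank matrix with restart probability β ∈ (0,1]. Then for every x ∈ Δ^n, (1/(4β))·||M_{pp(β)} x − s||₁ ≤ ||L†||₁. -/
import Mathlib


open Matrix Finset

/-- The personalized PageRank matrix `β (I - (1-β) W)⁻¹` with restart probability `β`. -/
noncomputable def pageRankMatrix {n : ℕ} (W : Matrix (Fin n) (Fin n) ℝ) (β : ℝ) :
    Matrix (Fin n) (Fin n) ℝ :=
  β • ((1 : Matrix (Fin n) (Fin n) ℝ) - (1 - β) • W)⁻¹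

/-- `B` is the Moore–Penrose pseudoinverse of `A` (the four Penrose conditions). -/
def IsMoorePenrose {m : Type*} [Fintype m] [DecidableEq m]
    (A B : Matrix m m ℝ) : Prop :=
  A * B * A = A ∧ B * A * B = B ∧ (A * B)ᵀ = A * B ∧ (B * A)ᵀ = B * A

/-- ℓ¹ contraction for a nonnegative matrix with unit column sums. -/
lemma col_stochastic_l1_contract {n : ℕ} (W : Matrix (Fin n) (Fin n) ℝ)
    (hWnn : ∀ i j, 0 ≤ W i j) (hWcol : ∀ j, ∑ i, W i j = 1) (v : Fin n → ℝ) :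
    ∑ i, |W.mulVec v i| ≤ ∑ i, |v i| := by
  calc ∑ i, |W.mulVec v i| ≤ ∑ i, ∑ j, W i j * |v j| := by
        refine Finset.sum_le_sum fun i _ => ?_
        calc |W.mulVec v i| = |∑ j, W i j * v j| := rfl
          _ ≤ ∑ j, |W i j * v j| := Finset.abs_sum_le_sum_abs _ _
          _ = ∑ j, W i j * |v j| := by
              refine Finset.sum_congr rfl fun j _ => ?_
              rw [abs_mul, abs_of_nonneg (hWnn i j)]
    _ = ∑ j, (∑ i, W i j) * |v j| := by
        rw [Finset.sum_comm]
        exact Finset.sum_congr rfl fun j _ => (Finset.sum_mul _ _ _).symm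
    _ = ∑ j, |v j| := by simp [hWcol]

/-- Perron-type uniqueness: a left fixed vector of an irreducible column-stochastic
matrix is constant. -/
lemma perron_const {n : ℕ} (hn : 0 < n) (W : Matrix (Fin n) (Fin n) ℝ)
    (hWnn : ∀ i j, 0 ≤ W i j) (hWcol : ∀ j, ∑ i, W i j = 1)
    (hirr : ∀ i j : Fin n, ∃ k : ℕ, 0 < (W ^ k) i j)
    (u : Fin n → ℝ) (hu : ∀ j, ∑ i, W i j * u i = u j) :
    ∀ i j, u i = u j := by
  have hpnn : ∀ k : ℕ, ∀ i j, 0 ≤ (W ^ k) i j := by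
    intro k
    induction k with
    | zero => intro i j; by_cases h : i = j <;> simp [h, Matrix.one_apply]
    | succ k ih =>
        intro i j
        rw [pow_succ, Matrix.mul_apply]
        exact Finset.sum_nonneg fun l _ => mul_nonneg (ih i l) (hWnn l j)
  have hpu : ∀ k : ℕ, ∀ j, ∑ i, (W ^ k) i j * u i = u j := by
    intro k
    induction k with
    | zero => intro j; simp [Matrix.one_apply]
    | succ k ih =>
        intro j
        rw [pow_succ]
        calc ∑ i, (W ^ k * W) i j * u i
            = ∑ i, ∑ l, (W ^ k) i l * W l j * u i := by
              refine Finset.sum_congr rfl fun i _ => ?_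
              rw [Matrix.mul_apply, Finset.sum_mul]
          _ = ∑ l, W l j * ∑ i, (W ^ k) i l * u i := by
              rw [Finset.sum_comm]
              refine Finset.sum_congr rfl fun l _ => ?_
              rw [Finset.mul_sum]
              exact Finset.sum_congr rfl fun i _ => by ring
          _ = ∑ l, W l j * u l := by
              exact Finset.sum_congr rfl fun l _ => by rw [ih l]
          _ = u j := hu j
  have : Nonempty (Fin n) := Fin.pos_iff_nonempty.mp hn
  have hne : (Finset.univ : Finset (Fin n)).Nonempty := Finset.univ_nonempty
  obtain ⟨j₀, -, hmax⟩ := Finset.exists_max_image Finset.univ u hne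
  have key : ∀ i, u i = u j₀ := by
    intro i
    by_contra hne'
    have hlt : u i < u j₀ := lt_of_le_of_ne (hmax i (Finset.mem_univ i)) hne'
    obtain ⟨k, hk⟩ := hirr i j₀
    have hpcol : ∀ k : ℕ, ∀ j, ∑ l, (W ^ k) l j = 1 := by
      intro k
      induction k with
      | zero => intro j; simp [Matrix.one_apply]
      | succ k ih =>
          intro j
          rw [pow_succ]
          calc ∑ l, (W ^ k * W) l j = ∑ l, ∑ m, (W ^ k) l m * W m j := by
                exact Finset.sum_congr rfl fun l _ => Matrix.mul_apply
            _ = ∑ m, (∑ l, (W ^ k) l m) * W m j := by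
                rw [Finset.sum_comm]
                exact Finset.sum_congr rfl fun m _ => (Finset.sum_mul _ _ _).symm
            _ = 1 := by
                rw [Finset.sum_congr rfl fun m _ => by rw [ih m]]
                simp [hWcol j]
    have hcolk : ∑ l, (W ^ k) l j₀ = 1 := hpcol k j₀
    have : ∑ l, (W ^ k) l j₀ * u l < ∑ l, (W ^ k) l j₀ * u j₀ := by
      refine Finset.sum_lt_sum (fun l _ => ?_) ⟨i, Finset.mem_univ i, ?_⟩
      · exact mul_le_mul_of_nonneg_left (hmax l (Finset.mem_univ l)) (hpnn k l j₀)
      · exact mul_lt_mul_of_pos_left hlt hk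
    rw [hpu k j₀, ← Finset.sum_mul, hcolk, one_mul] at this
    exact lt_irrefl _ this
  intro i j; rw [key i, key j]

/-- The symmetric projection `L Lp` fixes every vector summing to zero. -/
lemma proj_fixes {n : ℕ} (hn : 0 < n) (W : Matrix (Fin n) (Fin n) ℝ)
    (hWnn : ∀ i j, 0 ≤ W i j) (hWcol : ∀ j, ∑ i, W i j = 1)
    (hirr : ∀ i j : Fin n, ∃ k : ℕ, 0 < (W ^ k) i j)
    (Lp : Matrix (Fin n) (Fin n) ℝ)
    (hLp : IsMoorePenrose ((1 : Matrix (Fin n) (Fin n) ℝ) - W) Lp)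
    (v : Fin n → ℝ) (hv : ∑ i, v i = 0) :
    (((1 : Matrix (Fin n) (Fin n) ℝ) - W) * Lp).mulVec v = v := by
  obtain ⟨h1, h2, h3, h4⟩ := hLp
  set L : Matrix (Fin n) (Fin n) ℝ := 1 - W with hL
  set P : Matrix (Fin n) (Fin n) ℝ := L * Lp with hP
  have hPP : P * P = P := by
    calc P * P = (L * Lp * L) * Lp := by rw [hP]; noncomm_ring
      _ = P := by rw [h1]
  have hLtP : Lᵀ * P = Lᵀ := by
    calc Lᵀ * P = Lᵀ * Pᵀ := by rw [h3]
      _ = (P * L)ᵀ := (Matrix.transpose_mul P L).symm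
      _ = (L * Lp * L)ᵀ := by rw [hP, Matrix.mul_assoc]
      _ = Lᵀ := by rw [h1]
  set w : Fin n → ℝ := v - P.mulVec v with hw
  have hLtw : Lᵀ.mulVec w = 0 := by
    rw [hw, Matrix.mulVec_sub, Matrix.mulVec_mulVec, hLtP, sub_self]
  have hker : ∀ j, ∑ i, W i j * w i = w j := by
    intro j
    have := congrFun hLtw j
    simp only [Matrix.mulVec, dotProduct, Matrix.transpose_apply, hL,
      Matrix.sub_apply, Matrix.one_apply, Pi.zero_apply] at this
    have h' : ∑ i, ((if i = j then (1:ℝ) else 0) - W i j) * w i = 0 := this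
    rw [Finset.sum_congr rfl (fun i _ => by ring_nf :
      ∀ i ∈ Finset.univ, ((if i = j then (1:ℝ) else 0) - W i j) * w i
        = (if i = j then (1:ℝ) else 0) * w i - W i j * w i)] at h'
    rw [Finset.sum_sub_distrib] at h'
    have h1' : ∑ i, (if i = j then (1:ℝ) else 0) * w i = w j := by
      simp [Finset.sum_ite_eq]
    linarith [h']
  have hconst := perron_const hn W hWnn hWcol hirr w hker
  have hPw : P.mulVec w = 0 := by
    rw [hw, Matrix.mulVec_sub, Matrix.mulVec_mulVec, hPP, sub_self]
  have hwv : ∑ i, w i * v i = 0 := by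
    have i0 : Fin n := ⟨0, hn⟩
    calc ∑ i, w i * v i = ∑ i, w i0 * v i := by
          exact Finset.sum_congr rfl fun i _ => by rw [hconst i i0]
      _ = w i0 * ∑ i, v i := by rw [Finset.mul_sum]
      _ = 0 := by rw [hv, mul_zero]
  have hwPv : ∑ i, w i * (P.mulVec v) i = 0 := by
    calc ∑ i, w i * (P.mulVec v) i = ∑ i, ∑ j, w i * (P i j * v j) := by
          refine Finset.sum_congr rfl fun i _ => ?_
          rw [show (P.mulVec v) i = ∑ j, P i j * v j from rfl, Finset.mul_sum]
      _ = ∑ j, (∑ i, P i j * w i) * v j := by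
          rw [Finset.sum_comm]
          refine Finset.sum_congr rfl fun j _ => ?_
          rw [Finset.sum_mul]
          exact Finset.sum_congr rfl fun i _ => by ring
      _ = 0 := by
          refine Finset.sum_eq_zero fun j _ => ?_
          have hsym : ∀ a b, P a b = P b a := by
            intro a b
            have h := congrFun (congrFun h3 b) a
            simpa [Matrix.transpose_apply] using h
          have hPwj : ∑ i, P i j * w i = (P.mulVec w) j := by
            rw [show (P.mulVec w) j = ∑ i, P j i * w i from rfl]
            exact Finset.sum_congr rfl fun i _ => by rw [hsym i j]
          rw [hPwj, hPw, Pi.zero_apply, zero_mul]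
  have hww : ∑ i, w i * w i = 0 := by
    have : ∑ i, w i * w i = ∑ i, w i * v i - ∑ i, w i * (P.mulVec v) i := by
      rw [← Finset.sum_sub_distrib]
      refine Finset.sum_congr rfl fun i _ => ?_
      rw [hw]; simp [Pi.sub_apply]; ring
    rw [this, hwv, hwPv, sub_zero]
  have hw0 : ∀ i, w i = 0 := by
    intro i
    have hnn : ∀ i ∈ Finset.univ, 0 ≤ w i * w i := fun i _ => mul_self_nonneg _
    have := (Finset.sum_eq_zero_iff_of_nonneg hnn).mp hww i (Finset.mem_univ i)
    exact mul_self_eq_zero.mp this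
  funext i
  have := hw0 i
  rw [hw] at this
  simp only [Pi.sub_apply] at this
  linarith

theorem pagerank_distance_le_pinv_norm' {n : ℕ} (hn : 0 < n)
    (W : Matrix (Fin n) (Fin n) ℝ)
    (hWnn : ∀ i j, 0 ≤ W i j) (hWcol : ∀ j, ∑ i, W i j = 1)
    (hirr : ∀ i j : Fin n, ∃ k : ℕ, 0 < (W ^ k) i j)
    (s : Fin n → ℝ) (hs : ∀ i, 0 ≤ s i) (hs1 : ∑ i, s i = 1)
    (hstat : W.mulVec s = s)
    (β : ℝ) (hβ0 : 0 < β) (hβ1 : β ≤ 1)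
    (Lp : Matrix (Fin n) (Fin n) ℝ)
    (hLp : IsMoorePenrose ((1 : Matrix (Fin n) (Fin n) ℝ) - W) Lp)
    (x : Fin n → ℝ) (hx : ∀ i, 0 ≤ x i) (hx1 : ∑ i, x i = 1) :
    (1 / (4 * β)) * ∑ i, |((pageRankMatrix W β).mulVec x) i - s i| ≤
      ⨆ j : Fin n, ∑ i, |Lp i j| := by
  have hβ1' : 0 ≤ 1 - β := by linarith
  set A : Matrix (Fin n) (Fin n) ℝ := 1 - (1 - β) • W with hA
  have hWc : ∀ v : Fin n → ℝ, ∑ i, |W.mulVec v i| ≤ ∑ i, |v i| :=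
    col_stochastic_l1_contract W hWnn hWcol
  have hAmv : ∀ z : Fin n → ℝ, A.mulVec z = z - (1 - β) • W.mulVec z := by
    intro z
    rw [hA, Matrix.sub_mulVec, Matrix.one_mulVec, Matrix.smul_mulVec]
  have hinj : ∀ z : Fin n → ℝ, A.mulVec z = 0 → z = 0 := by
    intro z hz
    have hzeq : ∀ i, z i = (1 - β) * (W.mulVec z) i := by
      intro i
      have h := congrFun (hAmv z) i
      rw [hz] at h
      simp only [Pi.zero_apply, Pi.sub_apply, Pi.smul_apply, smul_eq_mul] at h
      linarith
    have hsum : ∑ i, |z i| ≤ (1 - β) * ∑ i, |z i| := by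
      calc ∑ i, |z i| = ∑ i, (1 - β) * |W.mulVec z i| := by
            refine Finset.sum_congr rfl fun i _ => ?_
            rw [hzeq i, abs_mul, abs_of_nonneg hβ1']
        _ = (1 - β) * ∑ i, |W.mulVec z i| := (Finset.mul_sum _ _ _).symm
        _ ≤ (1 - β) * ∑ i, |z i| := mul_le_mul_of_nonneg_left (hWc z) hβ1'
    have hnn : 0 ≤ ∑ i, |z i| := Finset.sum_nonneg fun i _ => abs_nonneg _
    have hz0 : ∑ i, |z i| = 0 := by nlinarith
    funext i
    have := (Finset.sum_eq_zero_iff_of_nonneg (fun i _ => abs_nonneg (z i))).mp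
      hz0 i (Finset.mem_univ i)
    exact abs_eq_zero.mp this
  have hdet : A.det ≠ 0 := by
    intro h
    obtain ⟨v, hv0, hv⟩ := Matrix.exists_mulVec_eq_zero_iff.mpr h
    exact hv0 (hinj v hv)
  have hAA : A * A⁻¹ = 1 := Matrix.mul_nonsing_inv A (isUnit_iff_ne_zero.mpr hdet)
  have hAAi : A⁻¹ * A = 1 := Matrix.nonsing_inv_mul A (isUnit_iff_ne_zero.mpr hdet)
  have hAinv_bound : ∀ y : Fin n → ℝ, ∑ i, |(A⁻¹.mulVec y) i| ≤ β⁻¹ * ∑ i, |y i| := by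
    intro y
    set z := A⁻¹.mulVec y with hzdef
    have hAz : A.mulVec z = y := by
      rw [hzdef, Matrix.mulVec_mulVec, hAA, Matrix.one_mulVec]
    have hy : ∀ i, y i = z i - (1 - β) * (W.mulVec z) i := by
      intro i
      have h := congrFun hAz i
      rw [hAmv] at h
      simp only [Pi.sub_apply, Pi.smul_apply, smul_eq_mul] at h
      linarith
    have h1 : ∑ i, |z i| ≤ ∑ i, |y i| + (1 - β) * ∑ i, |z i| := by
      calc ∑ i, |z i| = ∑ i, |y i + (1 - β) * (W.mulVec z) i| := by
            refine Finset.sum_congr rfl fun i _ => ?_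
            congr 1
            have := hy i; linarith
        _ ≤ ∑ i, (|y i| + (1 - β) * |W.mulVec z i|) := by
            refine Finset.sum_le_sum fun i _ => ?_
            calc |y i + (1 - β) * (W.mulVec z) i|
                ≤ |y i| + |(1 - β) * (W.mulVec z) i| := abs_add_le _ _
              _ = |y i| + (1 - β) * |W.mulVec z i| := by
                  rw [abs_mul, abs_of_nonneg hβ1']
        _ = ∑ i, |y i| + (1 - β) * ∑ i, |W.mulVec z i| := by
            rw [Finset.sum_add_distrib, Finset.mul_sum]
        _ ≤ ∑ i, |y i| + (1 - β) * ∑ i, |z i| := by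
            have := mul_le_mul_of_nonneg_left (hWc z) hβ1'
            linarith
    have hb : β * ∑ i, |z i| ≤ ∑ i, |y i| := by nlinarith
    calc ∑ i, |z i| = β⁻¹ * (β * ∑ i, |z i|) := by
          field_simp
      _ ≤ β⁻¹ * ∑ i, |y i| := by
          exact mul_le_mul_of_nonneg_left hb (by positivity)
  have hMs : A⁻¹.mulVec s = β⁻¹ • s := by
    have hAs : A.mulVec (β⁻¹ • s) = s := by
      rw [Matrix.mulVec_smul, hAmv, hstat]
      funext i
      simp only [Pi.smul_apply, Pi.sub_apply, smul_eq_mul]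
      field_simp
      ring
    calc A⁻¹.mulVec s = A⁻¹.mulVec (A.mulVec (β⁻¹ • s)) := by rw [hAs]
      _ = (A⁻¹ * A).mulVec (β⁻¹ • s) := Matrix.mulVec_mulVec _ _ _
      _ = β⁻¹ • s := by rw [hAAi, Matrix.one_mulVec]
  set L : Matrix (Fin n) (Fin n) ℝ := 1 - W with hLdef
  have hLA : L = A - β • W := by
    rw [hLdef, hA, sub_sub, ← add_smul]
    norm_num
  have hAiL : A⁻¹ * L = 1 - β • (A⁻¹ * W) := by
    rw [hLA, Matrix.mul_sub, hAAi, Matrix.mul_smul]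
  set v : Fin n → ℝ := x - s with hvdef
  have hvsum : ∑ i, v i = 0 := by
    simp only [hvdef, Pi.sub_apply]
    rw [Finset.sum_sub_distrib, hx1, hs1, sub_self]
  set c : Fin n → ℝ := Lp.mulVec v with hcdef
  have hproj : L.mulVec c = v := by
    rw [hcdef, Matrix.mulVec_mulVec]
    exact proj_fixes hn W hWnn hWcol hirr Lp hLp v hvsum
  set q : Fin n → ℝ := A⁻¹.mulVec (W.mulVec c) with hqdef
  have hMxs : ∀ i, ((pageRankMatrix W β).mulVec x) i - s i = β * (c i - β * q i) := by
    have hMx : (pageRankMatrix W β).mulVec x = β • A⁻¹.mulVec x := by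
      simp only [pageRankMatrix, ← hA, Matrix.smul_mulVec]
    have hxvs : x = v + s := by funext i; simp [hvdef]
    have hAv : A⁻¹.mulVec x = A⁻¹.mulVec v + β⁻¹ • s := by
      rw [hxvs, Matrix.mulVec_add, hMs]
    have hAvc : A⁻¹.mulVec v = c - β • q := by
      rw [hqdef, Matrix.mulVec_mulVec, ← hproj, Matrix.mulVec_mulVec, hAiL,
        Matrix.sub_mulVec, Matrix.one_mulVec, Matrix.smul_mulVec]
    intro i
    rw [hMx]
    have : (β • A⁻¹.mulVec x) i = β * ((c i - β * q i) + β⁻¹ * s i) := by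
      rw [hAv, hAvc]
      simp only [Pi.smul_apply, Pi.add_apply, Pi.sub_apply, smul_eq_mul]
    rw [this]
    field_simp
    ring
  set S : ℝ := ⨆ j : Fin n, ∑ i, |Lp i j| with hSdef
  have hcol_le : ∀ j, ∑ i, |Lp i j| ≤ S := fun j =>
    le_ciSup (f := fun j : Fin n => ∑ i, |Lp i j|)
      (Set.Finite.bddAbove (Set.finite_range _)) j
  have hS0 : 0 ≤ S :=
    le_trans (Finset.sum_nonneg fun i _ => abs_nonneg _) (hcol_le ⟨0, hn⟩)
  have hcS : ∑ i, |c i| ≤ S * ∑ j, |v j| := by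
    calc ∑ i, |c i| ≤ ∑ i, ∑ j, |Lp i j| * |v j| := by
          refine Finset.sum_le_sum fun i _ => ?_
          calc |c i| = |∑ j, Lp i j * v j| := rfl
            _ ≤ ∑ j, |Lp i j * v j| := Finset.abs_sum_le_sum_abs _ _
            _ = ∑ j, |Lp i j| * |v j| := by
                exact Finset.sum_congr rfl fun j _ => abs_mul _ _
      _ = ∑ j, (∑ i, |Lp i j|) * |v j| := by
          rw [Finset.sum_comm]
          exact Finset.sum_congr rfl fun j _ => (Finset.sum_mul _ _ _).symm
      _ ≤ ∑ j, S * |v j| := Finset.sum_le_sum fun j _ =>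
          mul_le_mul_of_nonneg_right (hcol_le j) (abs_nonneg _)
      _ = S * ∑ j, |v j| := (Finset.mul_sum _ _ _).symm
  have hv2 : ∑ j, |v j| ≤ 2 := by
    calc ∑ j, |v j| ≤ ∑ j, (x j + s j) := by
          refine Finset.sum_le_sum fun j _ => ?_
          calc |v j| = |x j - s j| := rfl
            _ ≤ |x j| + |s j| := abs_sub _ _
            _ = x j + s j := by rw [abs_of_nonneg (hx j), abs_of_nonneg (hs j)]
      _ = 2 := by rw [Finset.sum_add_distrib, hx1, hs1]; norm_num
  have hq_le : ∑ i, |q i| ≤ β⁻¹ * ∑ i, |c i| :=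
    le_trans (hAinv_bound _) (mul_le_mul_of_nonneg_left (hWc c) (by positivity))
  have hT : ∑ i, |((pageRankMatrix W β).mulVec x) i - s i| ≤ 4 * β * S := by
    calc ∑ i, |((pageRankMatrix W β).mulVec x) i - s i|
        = β * ∑ i, |c i - β * q i| := by
          rw [Finset.mul_sum]
          refine Finset.sum_congr rfl fun i _ => ?_
          rw [hMxs i, abs_mul, abs_of_pos hβ0]
      _ ≤ β * (∑ i, |c i| + β * ∑ i, |q i|) := by
          refine mul_le_mul_of_nonneg_left ?_ hβ0.le
          calc ∑ i, |c i - β * q i| ≤ ∑ i, (|c i| + β * |q i|) := by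
                refine Finset.sum_le_sum fun i _ => ?_
                calc |c i - β * q i| ≤ |c i| + |β * q i| := abs_sub _ _
                  _ = |c i| + β * |q i| := by rw [abs_mul, abs_of_pos hβ0]
            _ = ∑ i, |c i| + β * ∑ i, |q i| := by
                rw [Finset.sum_add_distrib, Finset.mul_sum]
      _ ≤ β * (2 * ∑ i, |c i|) := by
          have h' : β * ∑ i, |q i| ≤ ∑ i, |c i| := by
            have := mul_le_mul_of_nonneg_left hq_le hβ0.le
            calc β * ∑ i, |q i| ≤ β * (β⁻¹ * ∑ i, |c i|) := this
              _ = ∑ i, |c i| := by field_simp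
          have hc0 : 0 ≤ ∑ i, |c i| := Finset.sum_nonneg fun i _ => abs_nonneg _
          nlinarith
      _ ≤ β * (2 * (S * ∑ j, |v j|)) := by
          refine mul_le_mul_of_nonneg_left ?_ hβ0.le
          nlinarith
      _ ≤ β * (2 * (S * 2)) := by
          refine mul_le_mul_of_nonneg_left ?_ hβ0.le
          nlinarith
      _ = 4 * β * S := by ring
  have h4β : (0:ℝ) < 4 * β := by positivity
  rw [div_mul_eq_mul_div, one_mul, div_le_iff₀ h4β]
  calc ∑ i, |((pageRankMatrix W β).mulVec x) i - s i| ≤ 4 * β * S := hT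
    _ = S * (4 * β) := by ring

/-- For `L = I - W` the directed Laplacian of a strongly connected graph with stationary
`s`, and `M_{pp(β)}` the personalized PageRank matrix with restart probability
`β ∈ (0,1]`: for every `x ∈ Δⁿ`, `(1/(4β)) ‖M_{pp(β)} x - s‖₁ ≤ ‖L†‖₁`, where `‖L†‖₁`
is the maximum column `ℓ₁` norm of the pseudoinverse. -/
theorem pagerank_distance_le_pinv_norm {n : ℕ} (hn : 0 < n)
    (W : Matrix (Fin n) (Fin n) ℝ)
    (hWnn : ∀ i j, 0 ≤ W i j) (hWcol : ∀ j, ∑ i, W i j = 1)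
    (hirr : ∀ i j : Fin n, ∃ k : ℕ, 0 < (W ^ k) i j)
    (s : Fin n → ℝ) (hs : ∀ i, 0 ≤ s i) (hs1 : ∑ i, s i = 1)
    (hstat : W.mulVec s = s)
    (β : ℝ) (hβ0 : 0 < β) (hβ1 : β ≤ 1)
    (Lp : Matrix (Fin n) (Fin n) ℝ)
    (hLp : IsMoorePenrose ((1 : Matrix (Fin n) (Fin n) ℝ) - W) Lp)
    (x : Fin n → ℝ) (hx : ∀ i, 0 ≤ x i) (hx1 : ∑ i, x i = 1) :
    (1 / (4 * β)) * ∑ i, |((pageRankMatrix W β).mulVec x) i - s i| ≤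
      ⨆ j : Fin n, ∑ i, |Lp i j| := by
  exact pagerank_distance_le_pinv_norm' hn W hWnn hWcol hirr s hs hs1 hstat
    β hβ0 hβ1 Lp hLp x hx hx1
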